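/- Let g be a nilpotent real Lie algebra with 1-dimensional commutator subalgebra [g,g]. Then every integrable complex structure J on g is abelian, i.e. [Jx,Jy] = [x,y] for all x,y ∈ g. -/

import Mathlib

/-- Every integrable complex structure on a nilpotent Lie algebra with 1-dimensional
commutator subalgebra is abelian. -/
theorem stmt_12 (g : Type*) [LieRing g] [LieAlgebra ℝ g] [LieRing.IsNilpotent g]
    [Module.Finite ℝ g]
    (hdim : Module.finrank ℝ (LieAlgebra.derivedSeries ℝ g 1 : Submodule ℝ g) = 1)
    (J : g →ₗ[ℝ] g) (hJ : J ∘ₗ J = -LinearMap.id)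
    (hint : ∀ x y : g, ⁅x, y⁆ - ⁅J x, J y⁆ + J ⁅J x, y⁆ + J ⁅x, J y⁆ = 0) :
    ∀ x y : g, ⁅J x, J y⁆ = ⁅x, y⁆ := by
  intro x y
  set S : Submodule ℝ g := (LieAlgebra.derivedSeries ℝ g 1 : Submodule ℝ g) with hS
  have hmem : ∀ a b : g, ⁅a, b⁆ ∈ S := by
    intro a b
    have : ⁅a, b⁆ ∈ LieAlgebra.derivedSeries ℝ g 1 := by
      rw [LieAlgebra.derivedSeries_def, LieAlgebra.derivedSeriesOfIdeal_succ, LieAlgebra.derivedSeriesOfIdeal_zero]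
      exact LieSubmodule.lie_mem_lie (LieSubmodule.mem_top a) (LieSubmodule.mem_top b)
    exact this
  set e : g := ⁅J x, y⁆ + ⁅x, J y⁆ with he
  have key := hint x y
  have hJJ : ∀ v : g, J (J v) = -v := by
    intro v
    have := congrArg (fun f : g →ₗ[ℝ] g => f v) hJ
    simpa using this
  have hd : ⁅x, y⁆ - ⁅J x, J y⁆ = -(J e) := by
    rw [he, map_add]
    rw [eq_neg_iff_add_eq_zero]
    calc ⁅x, y⁆ - ⁅J x, J y⁆ + (J ⁅J x, y⁆ + J ⁅x, J y⁆)
        = ⁅x, y⁆ - ⁅J x, J y⁆ + J ⁅J x, y⁆ + J ⁅x, J y⁆ := by abel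
      _ = 0 := key
  by_cases hez : e = 0
  · have : ⁅x, y⁆ - ⁅J x, J y⁆ = 0 := by rw [hd, hez, map_zero, neg_zero]
    exact (sub_eq_zero.mp this).symm
  · exfalso
    have heS : e ∈ S := S.add_mem (hmem _ _) (hmem _ _)
    have hdS : ⁅x, y⁆ - ⁅J x, J y⁆ ∈ S := S.sub_mem (hmem _ _) (hmem _ _)
    -- e spans S
    have hnz : (⟨e, heS⟩ : S) ≠ 0 := by
      intro h
      exact hez (congrArg Subtype.val h)
    have hspan : Submodule.span ℝ {(⟨e, heS⟩ : S)} = ⊤ :=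
      (finrank_eq_one_iff_of_nonzero _ hnz).mp hdim
    have : (⟨⁅x, y⁆ - ⁅J x, J y⁆, hdS⟩ : S) ∈ Submodule.span ℝ {(⟨e, heS⟩ : S)} := by
      rw [hspan]; trivial
    obtain ⟨c, hc⟩ := Submodule.mem_span_singleton.mp this
    have hc' : c • e = ⁅x, y⁆ - ⁅J x, J y⁆ := congrArg Subtype.val hc
    have hJe : J e = (-c) • e := by
      have : -(J e) = c • e := by rw [← hd, hc']
      have := congrArg Neg.neg this
      simpa [neg_smul] using this
    have : -e = (c * c) • e := by
      calc -e = J (J e) := (hJJ e).symm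
        _ = J ((-c) • e) := by rw [hJe]
        _ = (-c) • J e := by rw [map_smul]
        _ = (-c) • ((-c) • e) := by rw [hJe]
        _ = (c * c) • e := by rw [smul_smul]; ring_nf
    have hz : (c * c + 1) • e = 0 := by
      rw [add_smul, one_smul, ← this]
      exact neg_add_cancel e
    have : e = 0 := by
      rcases smul_eq_zero.mp hz with h | h
      · nlinarith
      · exact h
    exact hez this
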